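/- (Second-order condition at a maximizing direction; step (5) in the proof of the paper's Lemma on holomorphic sectional curvature.) Let R be a Kähler-like curvature tensor on V and let u be a unit vector with H(u) ≥ H(v) for every unit vector v ∈ V. Then for every unit vector w ∈ V with ⟨w,u⟩ = 0, the real number R(u,u,w,w) satisfies 2·R(u,u,w,w) ≤ H(u) = R(u,u,u,u). -/

import Mathlib

/-- A Kähler-like curvature tensor on a complex vector space `V`:
a map `R : V × V × V × V → ℂ` that is complex-linear in the first and third
arguments, conjugate-linear in the second and fourth arguments, and satisfies
the symmetries `R(X,Y,Z,W) = R(Z,Y,X,W)` and `R(X,Y,Z,W) = conj (R(Y,X,W,Z))`. -/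
structure IsKahlerLike {V : Type*} [AddCommGroup V] [Module ℂ V]
    (R : V → V → V → V → ℂ) : Prop where
  add1 : ∀ X X' Y Z W, R (X + X') Y Z W = R X Y Z W + R X' Y Z W
  smul1 : ∀ (a : ℂ) (X Y Z W), R (a • X) Y Z W = a * R X Y Z W
  add2 : ∀ X Y Y' Z W, R X (Y + Y') Z W = R X Y Z W + R X Y' Z W
  smul2 : ∀ (a : ℂ) (X Y Z W), R X (a • Y) Z W = (starRingEnd ℂ) a * R X Y Z W
  add3 : ∀ X Y Z Z' W, R X Y (Z + Z') W = R X Y Z W + R X Y Z' W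
  smul3 : ∀ (a : ℂ) (X Y Z W), R X Y (a • Z) W = a * R X Y Z W
  add4 : ∀ X Y Z W W', R X Y Z (W + W') = R X Y Z W + R X Y Z W'
  smul4 : ∀ (a : ℂ) (X Y Z W), R X Y Z (a • W) = (starRingEnd ℂ) a * R X Y Z W
  sym13 : ∀ X Y Z W, R X Y Z W = R Z Y X W
  symConj : ∀ X Y Z W, R X Y Z W = (starRingEnd ℂ) (R Y X W Z)

lemma kl_expand {V : Type*} [AddCommGroup V] [Module ℂ V]
    (R : V → V → V → V → ℂ) (hR : IsKahlerLike R) (u w : V) (p q : ℂ) :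
    R (p•u+q•w) (p•u+q•w) (p•u+q•w) (p•u+q•w) =
      p * starRingEnd ℂ p * p * starRingEnd ℂ p * R u u u u
    + p * starRingEnd ℂ p * p * starRingEnd ℂ q * R u u u w
    + p * starRingEnd ℂ p * q * starRingEnd ℂ p * R u u w u
    + p * starRingEnd ℂ p * q * starRingEnd ℂ q * R u u w w
    + p * starRingEnd ℂ q * p * starRingEnd ℂ p * R u w u u
    + p * starRingEnd ℂ q * p * starRingEnd ℂ q * R u w u w
    + p * starRingEnd ℂ q * q * starRingEnd ℂ p * R u w w u
    + p * starRingEnd ℂ q * q * starRingEnd ℂ q * R u w w w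
    + q * starRingEnd ℂ p * p * starRingEnd ℂ p * R w u u u
    + q * starRingEnd ℂ p * p * starRingEnd ℂ q * R w u u w
    + q * starRingEnd ℂ p * q * starRingEnd ℂ p * R w u w u
    + q * starRingEnd ℂ p * q * starRingEnd ℂ q * R w u w w
    + q * starRingEnd ℂ q * p * starRingEnd ℂ p * R w w u u
    + q * starRingEnd ℂ q * p * starRingEnd ℂ q * R w w u w
    + q * starRingEnd ℂ q * q * starRingEnd ℂ p * R w w w u
    + q * starRingEnd ℂ q * q * starRingEnd ℂ q * R w w w w := by
  simp only [hR.add1, hR.add2, hR.add3, hR.add4, hR.smul1, hR.smul2, hR.smul3, hR.smul4]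
  ring

lemma kl_sum {V : Type*} [AddCommGroup V] [Module ℂ V]
    (R : V → V → V → V → ℂ) (hR : IsKahlerLike R) (u w : V) (c s : ℝ) :
      R ((c:ℂ)•u + (s:ℂ)•w) ((c:ℂ)•u + (s:ℂ)•w) ((c:ℂ)•u + (s:ℂ)•w) ((c:ℂ)•u + (s:ℂ)•w)
    + R ((c:ℂ)•u + (-(s:ℂ))•w) ((c:ℂ)•u + (-(s:ℂ))•w) ((c:ℂ)•u + (-(s:ℂ))•w) ((c:ℂ)•u + (-(s:ℂ))•w)
    + R ((c:ℂ)•u + ((s:ℂ)*Complex.I)•w) ((c:ℂ)•u + ((s:ℂ)*Complex.I)•w)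
        ((c:ℂ)•u + ((s:ℂ)*Complex.I)•w) ((c:ℂ)•u + ((s:ℂ)*Complex.I)•w)
    + R ((c:ℂ)•u + (-((s:ℂ)*Complex.I))•w) ((c:ℂ)•u + (-((s:ℂ)*Complex.I))•w)
        ((c:ℂ)•u + (-((s:ℂ)*Complex.I))•w) ((c:ℂ)•u + (-((s:ℂ)*Complex.I))•w) =
      ((4*c^4 : ℝ):ℂ) * R u u u u
    + ((4*c^2*s^2 : ℝ):ℂ) * (R u u w w + R u w w u + R w u u w + R w w u u)
    + ((4*s^4 : ℝ):ℂ) * R w w w w := by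
  simp only [kl_expand R hR, map_mul, map_neg, Complex.conj_ofReal, Complex.conj_I]
  push_cast
  ring_nf
  simp [Complex.I_sq]
  ring

lemma norm_comb {V : Type*} [NormedAddCommGroup V] [InnerProductSpace ℂ V]
    (u w : V) (hu : ‖u‖ = 1) (hw : ‖w‖ = 1) (huw : (inner ℂ u w : ℂ) = 0)
    (b : ℂ) (c : ℝ) (hc : 0 ≤ c) (h1 : c^2 + ‖b‖ ^ 2 = 1) :
    ‖(c:ℂ)•u + b•w‖ = 1 := by
  have hin : (inner ℂ ((c:ℂ)•u) (b•w) : ℂ) = 0 := by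
    rw [inner_smul_left, inner_smul_right, huw]; ring
  have hsq : ‖(c:ℂ)•u + b•w‖^2 = 1 := by
    rw [@norm_add_sq ℂ, hin]
    simpa [norm_smul, hu, hw, Complex.norm_real, abs_of_nonneg hc] using h1
  have h0 := norm_nonneg ((c:ℂ)•u + b•w)
  have hfac : (‖(c:ℂ)•u + b•w‖ - 1) * (‖(c:ℂ)•u + b•w‖ + 1) = 0 := by
    linear_combination hsq
  rcases mul_eq_zero.mp hfac with h | h
  · linarith
  · linarith

/-- Second-order condition at a maximizing direction: if the unit vector `u` maximizes the
holomorphic sectional curvature over unit vectors, then for every unit vector `w` orthogonal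
to `u` one has `2·R(u,u,w,w) ≤ H(u) = R(u,u,u,u)`. -/
theorem kahlerLike_max_second_order {V : Type*} [NormedAddCommGroup V] [InnerProductSpace ℂ V]
    [FiniteDimensional ℂ V]
    (R : V → V → V → V → ℂ) (hR : IsKahlerLike R)
    (u : V) (hu : ‖u‖ = 1)
    (hmax : ∀ v : V, ‖v‖ = 1 → (R v v v v).re ≤ (R u u u u).re) :
    ∀ w : V, ‖w‖ = 1 → (inner ℂ w u : ℂ) = 0 →
      2 * (R u u w w).re ≤ (R u u u u).re := by
  intro w hw hwu
  have huw : (inner ℂ u w : ℂ) = 0 := by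
    rw [← inner_conj_symm, hwu, map_zero]
  set A := (R u u u u).re with hA
  set B := (R u u w w).re with hB
  set E := (R w w w w).re with hE
  have hB1 : (R w u u w).re = B := by rw [hR.sym13 w u u w]
  have hB2 : (R u w w u).re = B := by
    rw [hR.symConj u w w u, Complex.conj_re, hR.sym13 w u u w]
  have hB3 : (R w w u u).re = B := by rw [hR.sym13 w w u u]; exact hB2
  have key : ∀ x : ℝ, 0 < x → x ≤ 1 → 4*B ≤ 2*A + x*(4*B - A - E) := by
    intro x hx0 hx1
    set s := Real.sqrt x with hsdef
    set c := Real.sqrt (1-x) with hcdef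
    have hs0 : 0 ≤ s := Real.sqrt_nonneg _
    have hc0 : 0 ≤ c := Real.sqrt_nonneg _
    have hs2 : s^2 = x := Real.sq_sqrt hx0.le
    have hc2 : c^2 = 1 - x := Real.sq_sqrt (by linarith)
    have habs : ∀ b : ℂ, ‖b‖ = s → c^2 + ‖b‖ ^ 2 = 1 := by
      intro b hb; rw [hb, hs2, hc2]; ring
    have ha1 : ‖((s:ℂ))‖ = s := by simp [Complex.norm_real, abs_of_nonneg hs0]
    have ha2 : ‖(-(s:ℂ))‖ = s := by simp [Complex.norm_real, abs_of_nonneg hs0]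
    have ha3 : ‖((s:ℂ)*Complex.I)‖ = s := by
      simp [map_mul, Complex.norm_real, abs_of_nonneg hs0]
    have ha4 : ‖(-((s:ℂ)*Complex.I))‖ = s := by
      simp [map_mul, Complex.norm_real, abs_of_nonneg hs0]
    have h1 := hmax _ (norm_comb u w hu hw huw _ c hc0 (habs _ ha1))
    have h2 := hmax _ (norm_comb u w hu hw huw _ c hc0 (habs _ ha2))
    have h3 := hmax _ (norm_comb u w hu hw huw _ c hc0 (habs _ ha3))
    have h4 := hmax _ (norm_comb u w hu hw huw _ c hc0 (habs _ ha4))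
    have hre := congrArg Complex.re (kl_sum R hR u w c s)
    simp only [Complex.add_re, Complex.re_ofReal_mul, hB1, hB2, hB3, ← hA, ← hB, ← hE] at hre
    have hineq : 4*c^4*A + 4*c^2*s^2*(B+B+B+B) + 4*s^4*E ≤ 4*A := by
      rw [← hre]; linarith
    have heq : 4*c^4*A + 4*c^2*s^2*(B+B+B+B) + 4*s^4*E
        = 4*(1-x)^2*A + 16*(1-x)*x*B + 4*x^2*E := by
      linear_combination (4*A*(c^2+1-x) + 16*B*s^2)*hc2 + (16*B*(1-x) + 4*E*(s^2+x))*hs2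
    rw [heq] at hineq
    nlinarith [hineq, hx0, mul_pos hx0 hx0]
  have h4B : 4*B ≤ 2*A := by
    by_contra h
    push_neg at h
    rcases le_or_gt (4*B - A - E) 0 with hM0 | hM0
    · have := key 1 one_pos le_rfl; linarith
    · have hxpos : 0 < (4*B - 2*A)/(2*(4*B - A - E)) :=
        div_pos (by linarith) (by linarith)
      obtain ⟨x, hx0, hx1, hxm⟩ :
          ∃ x : ℝ, 0 < x ∧ x ≤ 1 ∧ x ≤ (4*B - 2*A)/(2*(4*B - A - E)) :=
        ⟨min 1 _, lt_min one_pos hxpos, min_le_left _ _, min_le_right _ _⟩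
      have hk := key x hx0 hx1
      have hne : (4*B - A - E) ≠ 0 := ne_of_gt hM0
      have hxM : x * (4*B - A - E) ≤ (4*B - 2*A)/2 := by
        calc x * (4*B - A - E)
            ≤ ((4*B - 2*A)/(2*(4*B - A - E))) * (4*B - A - E) :=
              mul_le_mul_of_nonneg_right hxm hM0.le
          _ = (4*B - 2*A)/2 := by field_simp
      linarith
  linarith
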